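/- Let 𝒟 be a symmetric (15,8,4)-design whose block family has a center point O. Then Aut(𝒟) contains a subgroup H isomorphic to (ZMod 2)³ such that every element of H fixes every point of Fin 15 outside O, and H acts sharply (simply) transitively on the 8 elements of O; in particular, 𝒟 is 7-pyramidal. -/

import Mathlib

/-- A symmetric (15,8,4)-design: 15 blocks, each an 8-element subset of `Fin 15`,
any two distinct blocks meeting in exactly 4 points. -/
def IsDesign (B : Finset (Finset (Fin 15))) : Prop :=
  B.card = 15 ∧ (∀ b ∈ B, b.card = 8) ∧
    ∀ b ∈ B, ∀ b' ∈ B, b ≠ b' → (b ∩ b').card = 4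

private lemma exists_preimage' {β : Type*} [Finite β] {P : β → Prop} {F : β → β}
    (hF : Function.Injective F) (h : ∀ b, P b → P (F b)) {b : β} (hb : P b) :
    ∃ b', P b' ∧ F b' = b := by
  have hGinj : Function.Injective (fun x : {x // P x} => (⟨F x.1, h _ x.2⟩ : {x // P x})) := by
    intro x y hxy
    exact Subtype.ext (hF (congrArg Subtype.val hxy))
  obtain ⟨x, hx⟩ := (Finite.injective_iff_surjective.mp hGinj) ⟨b, hb⟩
  exact ⟨x.1, x.2, congrArg Subtype.val hx⟩

/-- The full automorphism group of the design with block family `B`. -/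
def designAut (B : Finset (Finset (Fin 15))) : Subgroup (Equiv.Perm (Fin 15)) where
  carrier := {σ | ∀ b ∈ B, b.image ⇑σ ∈ B}
  one_mem' := by intro b hb; simpa using hb
  mul_mem' := by
    intro a c ha hc b hb
    have := ha _ (hc b hb)
    simpa [Finset.image_image, Equiv.Perm.coe_mul] using this
  inv_mem' := by
    intro σ hσ b hb
    obtain ⟨b', hb', hEq⟩ := exists_preimage' (F := fun s => Finset.image (⇑σ) s)
      (Finset.image_injective σ.injective) (fun s hs => hσ s hs) hb
    rw [← hEq, Finset.image_image]
    have : ⇑σ⁻¹ ∘ ⇑σ = id := by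
      funext x; simp
    rw [this, Finset.image_id]
    exact hb'

/-- `O` is a center point of the block family `B`. -/
def IsCenter (B : Finset (Finset (Fin 15))) (O : Finset (Fin 15)) : Prop :=
  O ∈ B ∧ ∀ b ∈ B, b ≠ O → symmDiff O b ∈ B

namespace Stmt18
open Finset

variable {B : Finset (Finset (Fin 15))} {O : Finset (Fin 15)}

private lemma nat_eq8 {a : ℕ} (h15 : a ≤ 15) (h : 16 * a = a * a + 64) : a = 8 := by
  interval_cases a <;> omega

private lemma nat_le8 {a : ℕ} : 16 * a ≤ a * a + 64 := by
  rcases le_or_gt a 8 with h | h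
  · nlinarith
  · nlinarith

lemma rep8 (hD : IsDesign B) (x : Fin 15) :
    (B.filter (fun b => x ∈ b)).card = 8 := by
  obtain ⟨hB, hk, hlam⟩ := hD
  set r : Fin 15 → ℕ := fun x => (B.filter (fun b => x ∈ b)).card with hr
  have hcf : ∀ x : Fin 15, r x = ∑ b ∈ B, if x ∈ b then 1 else 0 := by
    intro x; exact Finset.card_filter _ _
  have hsum1 : ∑ x : Fin 15, r x = 120 := by
    calc ∑ x : Fin 15, r x = ∑ x : Fin 15, ∑ b ∈ B, if x ∈ b then 1 else 0 := by
          simp [hcf]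
      _ = ∑ b ∈ B, ∑ x : Fin 15, if x ∈ b then 1 else 0 := Finset.sum_comm
      _ = ∑ b ∈ B, b.card := by
          refine Finset.sum_congr rfl fun b _ => ?_
          rw [← Finset.card_filter]
          congr 1
          simp
      _ = 120 := by
          rw [Finset.sum_congr rfl fun b hb => hk b hb]
          simp [hB]
  have hsum2 : ∑ x : Fin 15, r x * r x = 960 := by
    have h1 : ∀ x : Fin 15, r x * r x
        = ∑ b ∈ B, ∑ b' ∈ B, if x ∈ b ∩ b' then 1 else 0 := by
      intro x
      rw [hcf, Finset.sum_mul_sum]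
      refine Finset.sum_congr rfl fun b _ => Finset.sum_congr rfl fun b' _ => ?_
      by_cases h : x ∈ b <;> by_cases h' : x ∈ b' <;> simp [h, h', Finset.mem_inter]
    calc ∑ x : Fin 15, r x * r x
        = ∑ x : Fin 15, ∑ b ∈ B, ∑ b' ∈ B, if x ∈ b ∩ b' then 1 else 0 := by simp [h1]
      _ = ∑ b ∈ B, ∑ x : Fin 15, ∑ b' ∈ B, if x ∈ b ∩ b' then 1 else 0 := Finset.sum_comm
      _ = ∑ b ∈ B, ∑ b' ∈ B, ∑ x : Fin 15, if x ∈ b ∩ b' then 1 else 0 :=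
          Finset.sum_congr rfl fun b _ => Finset.sum_comm
      _ = ∑ b ∈ B, ∑ b' ∈ B, (b ∩ b').card := by
          refine Finset.sum_congr rfl fun b _ => Finset.sum_congr rfl fun b' _ => ?_
          rw [← Finset.card_filter]; congr 1; ext a; simp
      _ = ∑ b ∈ B, ((b ∩ b).card + ∑ b' ∈ B.erase b, (b ∩ b').card) := by
          refine Finset.sum_congr rfl fun b hb => ?_
          rw [← Finset.add_sum_erase _ _ hb]
      _ = 960 := by
          have heq : ∀ b ∈ B, (b ∩ b).card + ∑ b' ∈ B.erase b, (b ∩ b').card = 64 := by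
            intro b hb
            have h8 : (b ∩ b).card = 8 := by rw [Finset.inter_self]; exact hk b hb
            have h56 : ∑ b' ∈ B.erase b, (b ∩ b').card = 56 := by
              rw [Finset.sum_congr rfl fun b' hb' => hlam b hb b' (Finset.mem_of_mem_erase hb')
                (Ne.symm (Finset.ne_of_mem_erase hb'))]
              simp [Finset.card_erase_of_mem hb, hB]
            omega
          rw [Finset.sum_congr rfl heq]
          simp [hB]
  have key : ∑ x : Fin 15, 16 * r x = ∑ x : Fin 15, (r x * r x + 64) := by
    rw [← Finset.mul_sum, hsum1, Finset.sum_add_distrib, hsum2]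
    simp
  have heach := (Finset.sum_eq_sum_iff_of_le (fun i _ => nat_le8)).mp key x (Finset.mem_univ x)
  exact nat_eq8 (le_trans (Finset.card_filter_le _ _) (le_of_eq hB)) heach

private lemma nat_eq4 {a : ℕ} (h15 : a ≤ 15) (h : 8 * a = a * a + 16) : a = 4 := by
  interval_cases a <;> omega

private lemma nat_le4 {a : ℕ} : 8 * a ≤ a * a + 16 := by
  rcases le_or_gt a 4 with h | h
  · nlinarith
  · nlinarith

lemma lam4 (hD : IsDesign B) {x y : Fin 15} (hxy : x ≠ y) :
    (B.filter (fun b => x ∈ b ∧ y ∈ b)).card = 4 := by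
  have hrep := rep8 hD
  obtain ⟨hB, hk, hlam⟩ := hD
  set Bx : Finset (Finset (Fin 15)) := B.filter (fun b => x ∈ b) with hBx
  have hBxcard : Bx.card = 8 := hrep x
  have hBxsub : ∀ b ∈ Bx, b ∈ B ∧ x ∈ b := by
    intro b hb; exact ⟨Finset.mem_of_mem_filter _ hb, (Finset.mem_filter.mp hb).2⟩
  set lam : Fin 15 → ℕ := fun y => (Bx.filter (fun b => y ∈ b)).card with hlamdef
  have hgoal : B.filter (fun b => x ∈ b ∧ y ∈ b) = Bx.filter (fun b => y ∈ b) := by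
    rw [hBx, Finset.filter_filter]
  rw [hgoal]
  -- counting over the 14 points ≠ x
  have hcf : ∀ z : Fin 15, lam z = ∑ b ∈ Bx, if z ∈ b then 1 else 0 := by
    intro z; exact Finset.card_filter _ _
  have herase : ∀ b ∈ Bx, ((Finset.univ.erase x).filter (fun z => z ∈ b)) = b.erase x := by
    intro b _; ext a; simp [and_comm]
  have herasecard : ∀ b ∈ Bx, (b.erase x).card = 7 := by
    intro b hb
    rw [Finset.card_erase_of_mem (hBxsub b hb).2, hk b (hBxsub b hb).1]
  have hsum1 : ∑ z ∈ Finset.univ.erase x, lam z = 56 := by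
    calc ∑ z ∈ Finset.univ.erase x, lam z
        = ∑ z ∈ Finset.univ.erase x, ∑ b ∈ Bx, if z ∈ b then 1 else 0 := by simp [hcf]
      _ = ∑ b ∈ Bx, ∑ z ∈ Finset.univ.erase x, if z ∈ b then 1 else 0 := Finset.sum_comm
      _ = ∑ b ∈ Bx, (b.erase x).card := by
          refine Finset.sum_congr rfl fun b hb => ?_
          rw [← Finset.card_filter, herase b hb]
      _ = 56 := by rw [Finset.sum_congr rfl herasecard]; simp [hBxcard]
  have hsum2 : ∑ z ∈ Finset.univ.erase x, lam z * lam z = 224 := by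
    have h1 : ∀ z : Fin 15, lam z * lam z
        = ∑ b ∈ Bx, ∑ b' ∈ Bx, if z ∈ b ∩ b' then 1 else 0 := by
      intro z
      rw [hcf, Finset.sum_mul_sum]
      refine Finset.sum_congr rfl fun b _ => Finset.sum_congr rfl fun b' _ => ?_
      by_cases h : z ∈ b <;> by_cases h' : z ∈ b' <;> simp [h, h', Finset.mem_inter]
    calc ∑ z ∈ Finset.univ.erase x, lam z * lam z
        = ∑ z ∈ Finset.univ.erase x, ∑ b ∈ Bx, ∑ b' ∈ Bx, if z ∈ b ∩ b' then 1 else 0 := by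
          simp [h1]
      _ = ∑ b ∈ Bx, ∑ z ∈ Finset.univ.erase x, ∑ b' ∈ Bx, if z ∈ b ∩ b' then 1 else 0 :=
          Finset.sum_comm
      _ = ∑ b ∈ Bx, ∑ b' ∈ Bx, ∑ z ∈ Finset.univ.erase x, if z ∈ b ∩ b' then 1 else 0 :=
          Finset.sum_congr rfl fun b _ => Finset.sum_comm
      _ = ∑ b ∈ Bx, ∑ b' ∈ Bx, ((b ∩ b').erase x).card := by
          refine Finset.sum_congr rfl fun b _ => Finset.sum_congr rfl fun b' _ => ?_
          rw [← Finset.card_filter]; congr 1; ext a; simp [and_comm]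
      _ = ∑ b ∈ Bx, (((b ∩ b).erase x).card + ∑ b' ∈ Bx.erase b, ((b ∩ b').erase x).card) := by
          refine Finset.sum_congr rfl fun b hb => ?_
          rw [← Finset.add_sum_erase _ _ hb]
      _ = 224 := by
          have heq : ∀ b ∈ Bx,
              ((b ∩ b).erase x).card + ∑ b' ∈ Bx.erase b, ((b ∩ b').erase x).card = 28 := by
            intro b hb
            have h7 : ((b ∩ b).erase x).card = 7 := by
              rw [Finset.inter_self]; exact herasecard b hb
            have h21 : ∑ b' ∈ Bx.erase b, ((b ∩ b').erase x).card = 21 := by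
              have h3 : ∀ b' ∈ Bx.erase b, ((b ∩ b').erase x).card = 3 := by
                intro b' hb'
                have hb'x := hBxsub b' (Finset.mem_of_mem_erase hb')
                have hbx := hBxsub b hb
                have h4 : (b ∩ b').card = 4 :=
                  hlam b hbx.1 b' hb'x.1 (Ne.symm (Finset.ne_of_mem_erase hb'))
                rw [Finset.card_erase_of_mem (Finset.mem_inter.mpr ⟨hbx.2, hb'x.2⟩), h4]
              rw [Finset.sum_congr rfl h3]
              simp [Finset.card_erase_of_mem hb, hBxcard]
            omega
          rw [Finset.sum_congr rfl heq]
          simp [hBxcard]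
  have key : ∑ z ∈ Finset.univ.erase x, 8 * lam z
      = ∑ z ∈ Finset.univ.erase x, (lam z * lam z + 16) := by
    rw [← Finset.mul_sum, hsum1, Finset.sum_add_distrib, hsum2]
    simp [Finset.card_erase_of_mem (Finset.mem_univ x)]
  have hy : y ∈ Finset.univ.erase x := by simp [Ne.symm hxy]
  have heach := (Finset.sum_eq_sum_iff_of_le (fun i _ => nat_le4)).mp key y hy
  exact nat_eq4 (le_trans (Finset.card_filter_le _ _) (le_trans (Finset.card_filter_le _ _) (le_of_eq hB))) heach
lemma triple (hD : IsDesign B) (hO : IsCenter B O) {S : Finset (Fin 15)}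
    (hSO : S ⊆ O) (hS3 : S.card = 3) :
    ∃! b, b ∈ B ∧ b ≠ O ∧ S ⊆ b := by
  classical
  obtain ⟨hOB, hcen⟩ := hO
  have hB : B.card = 15 := hD.1
  have hk := hD.2.1
  have hm_le3 : ∀ b : Finset (Fin 15), (b ∩ S).card ≤ 3 :=
    fun b => le_trans (Finset.card_le_card Finset.inter_subset_right) (le_of_eq hS3)
  -- sum of m over B
  have hbS : ∀ b : Finset (Fin 15), b ∩ S = S.filter (fun a => a ∈ b) := by
    intro b; ext a; simp [and_comm]
  have e1 : ∑ b ∈ B, (b ∩ S).card = 24 := by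
    calc ∑ b ∈ B, (b ∩ S).card = ∑ b ∈ B, ∑ a ∈ S, if a ∈ b then 1 else 0 := by
          refine Finset.sum_congr rfl fun b _ => ?_
          rw [hbS b]; exact Finset.card_filter _ _
      _ = ∑ a ∈ S, ∑ b ∈ B, if a ∈ b then 1 else 0 := Finset.sum_comm
      _ = ∑ a ∈ S, (B.filter (fun b => a ∈ b)).card := by
          refine Finset.sum_congr rfl fun a _ => ?_
          rw [← Finset.card_filter]
      _ = 24 := by
          rw [Finset.sum_congr rfl fun a _ => rep8 hD a, Finset.sum_const, hS3]
          norm_num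
  have e2 : ∑ b ∈ B, (b ∩ S).offDiag.card = 24 := by
    have hoff : ∀ b : Finset (Fin 15),
        (b ∩ S).offDiag = S.offDiag.filter (fun p => p.1 ∈ b ∧ p.2 ∈ b) := by
      intro b; ext ⟨u, v⟩
      simp only [Finset.mem_offDiag, Finset.mem_filter, Finset.mem_inter]
      tauto
    calc ∑ b ∈ B, (b ∩ S).offDiag.card
        = ∑ b ∈ B, ∑ p ∈ S.offDiag, if p.1 ∈ b ∧ p.2 ∈ b then 1 else 0 := by
          refine Finset.sum_congr rfl fun b _ => ?_
          rw [hoff b]; exact Finset.card_filter _ _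
      _ = ∑ p ∈ S.offDiag, ∑ b ∈ B, if p.1 ∈ b ∧ p.2 ∈ b then 1 else 0 := Finset.sum_comm
      _ = ∑ p ∈ S.offDiag, (B.filter (fun b => p.1 ∈ b ∧ p.2 ∈ b)).card := by
          refine Finset.sum_congr rfl fun p _ => ?_
          rw [← Finset.card_filter]
      _ = 24 := by
          have h4 : ∀ p ∈ S.offDiag, (B.filter (fun b => p.1 ∈ b ∧ p.2 ∈ b)).card = 4 := by
            intro p hp
            exact lam4 hD (Finset.mem_offDiag.mp hp).2.2
          rw [Finset.sum_congr rfl h4, Finset.sum_const, Finset.offDiag_card, hS3]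
          norm_num
  have hOS : O ∩ S = S := Finset.inter_eq_right.mpr hSO
  set B' : Finset (Finset (Fin 15)) := B.erase O with hB'def
  have hB'card : B'.card = 14 := by rw [hB'def, Finset.card_erase_of_mem hOB, hB]
  have sum_m' : ∑ b ∈ B', (b ∩ S).card = 21 := by
    have h := Finset.sum_erase_add B (fun b => (b ∩ S).card) hOB
    simp only [e1, hOS, hS3] at h
    rw [hB'def]
    omega
  have sum_q' : ∑ b ∈ B', (b ∩ S).offDiag.card = 18 := by
    have h := Finset.sum_erase_add B (fun b => (b ∩ S).offDiag.card) hOB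
    beta_reduce at h
    rw [e2, hOS] at h
    have h6 : S.offDiag.card = 6 := by rw [Finset.offDiag_card, hS3]
    rw [h6] at h
    rw [hB'def]
    omega
  -- the involution b ↦ O △ b
  set ι : Finset (Fin 15) → Finset (Fin 15) := fun b => symmDiff O b with hιdef
  have hι2 : ∀ b, ι (ι b) = b := fun b => symmDiff_symmDiff_cancel_left O b
  have hι_mem : ∀ b ∈ B', ι b ∈ B' := by
    intro b hb
    have hbB : b ∈ B := Finset.mem_of_mem_erase hb
    have hbO : b ≠ O := Finset.ne_of_mem_erase hb
    have h1 : ι b ∈ B := hcen b hbB hbO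
    have h2 : ι b ≠ O := by
      intro h
      have : b = ∅ := by
        have := hι2 b
        rw [h] at this
        rw [← this, hιdef]; simp
      rw [this] at hbB
      have := hk ∅ hbB
      simp at this
    exact Finset.mem_erase.mpr ⟨h2, h1⟩
  have hm_ι : ∀ b, b ∈ B' → (ι b ∩ S).card = 3 - (b ∩ S).card := by
    intro b _
    have h1 : ι b ∩ S = S \ (b ∩ S) := by
      ext a
      simp only [hιdef, Finset.mem_inter, Finset.mem_symmDiff, Finset.mem_sdiff]
      constructor
      · rintro ⟨h, hs⟩; rcases h with ⟨_, hnb⟩ | ⟨hb, hno⟩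
        · exact ⟨hs, fun hc => hnb hc.1⟩
        · exact absurd (hSO hs) hno
      · rintro ⟨hs, hnb⟩
        exact ⟨Or.inl ⟨hSO hs, fun hb => hnb ⟨hb, hs⟩⟩, hs⟩
    rw [h1, Finset.card_sdiff_of_subset Finset.inter_subset_right, hS3]
  have e3 : ∑ b ∈ B', (ι b ∩ S).offDiag.card = 18 := by
    have h := Finset.sum_nbij' (s := B') (t := B')
      (f := fun b => ((ι b) ∩ S).offDiag.card) (g := fun b => (b ∩ S).offDiag.card)
      (i := ι) (j := ι) hι_mem hι_mem (fun b _ => hι2 b) (fun b _ => hι2 b) (fun b _ => rfl)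
    rw [h]; exact sum_q'
  -- pointwise values
  set P : Finset (Fin 15) → Prop := fun b => (b ∩ S).card = 0 ∨ (b ∩ S).card = 3 with hPdef
  have hval : ∀ b ∈ B', (b ∩ S).offDiag.card + (ι b ∩ S).offDiag.card
      = if P b then 6 else 2 := by
    intro b hb
    rw [Finset.offDiag_card, Finset.offDiag_card, hm_ι b hb]
    have h3 := hm_le3 b
    by_cases h : P b
    · rw [if_pos h]; rcases h with h | h <;> rw [h]
    · rw [if_neg h]
      rw [hPdef] at h
      push_neg at h
      interval_cases hm : (b ∩ S).card <;> omega
  have hsum36 : ∑ b ∈ B', (if P b then 6 else 2) = 36 := by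
    rw [← Finset.sum_congr rfl hval, Finset.sum_add_distrib, sum_q', e3]
  set a : ℕ := (B'.filter P).card with hadef
  have ha2 : a = 2 := by
    have hsplit : ∑ b ∈ B', (if P b then 6 else 2) = 6 * a + 2 * (B'.card - a) := by
      rw [Finset.sum_ite, Finset.sum_const, Finset.sum_const]
      have h1 := Finset.card_filter_add_card_filter_not (s := B') (p := P)
      have h2 : B'.filter (fun x => P x) = B'.filter P := rfl
      have h3 : B'.filter (fun x => ¬ P x) = B'.filter (fun a => ¬ P a) := rfl
      simp only [smul_eq_mul]
      rw [h2, h3]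
      omega
    rw [hsplit, hB'card] at hsum36
    have hale : a ≤ 14 := le_trans (Finset.card_filter_le _ _) (le_of_eq hB'card)
    omega
  -- split a into the m=0 and m=3 parts
  have hPsplit : B'.filter P = B'.filter (fun b => (b ∩ S).card = 0)
      ∪ B'.filter (fun b => (b ∩ S).card = 3) := by
    rw [← Finset.filter_or]
  have hdisj : Disjoint (B'.filter (fun b => (b ∩ S).card = 0))
      (B'.filter (fun b => (b ∩ S).card = 3)) := by
    rw [Finset.disjoint_left]
    intro b h0 h3
    have := (Finset.mem_filter.mp h0).2
    have := (Finset.mem_filter.mp h3).2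
    omega
  have hcards : (B'.filter (fun b => (b ∩ S).card = 0)).card
      + (B'.filter (fun b => (b ∩ S).card = 3)).card = 2 := by
    rw [← Finset.card_union_of_disjoint hdisj, ← hPsplit, ← hadef, ha2]
  have hbij : (B'.filter (fun b => (b ∩ S).card = 3)).card
      = (B'.filter (fun b => (b ∩ S).card = 0)).card := by
    apply Finset.card_nbij' (i := ι) (j := ι)
    · intro b hb
      obtain ⟨hb', hm⟩ := Finset.mem_filter.mp hb
      exact Finset.mem_filter.mpr ⟨hι_mem b hb', by rw [hm_ι b hb', hm]⟩
    · intro b hb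
      obtain ⟨hb', hm⟩ := Finset.mem_filter.mp hb
      exact Finset.mem_filter.mpr ⟨hι_mem b hb', by rw [hm_ι b hb', hm]⟩
    · intro b _; exact hι2 b
    · intro b _; exact hι2 b
  have ht3 : (B'.filter (fun b => (b ∩ S).card = 3)).card = 1 := by omega
  obtain ⟨b₀, hb₀⟩ := Finset.card_eq_one.mp ht3
  have hb₀mem : b₀ ∈ B' ∧ (b₀ ∩ S).card = 3 := by
    have : b₀ ∈ B'.filter (fun b => (b ∩ S).card = 3) := by rw [hb₀]; exact Finset.mem_singleton_self b₀
    exact Finset.mem_filter.mp this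
  have hSsub : ∀ b : Finset (Fin 15), (b ∩ S).card = 3 → S ⊆ b := by
    intro b hm
    have : b ∩ S = S := Finset.eq_of_subset_of_card_le Finset.inter_subset_right (by omega)
    intro a ha
    rw [← this] at ha
    exact (Finset.mem_inter.mp ha).1
  refine ⟨b₀, ⟨Finset.mem_of_mem_erase hb₀mem.1, Finset.ne_of_mem_erase hb₀mem.1,
    hSsub b₀ hb₀mem.2⟩, ?_⟩
  rintro c ⟨hcB, hcO, hcS⟩
  have : c ∈ B'.filter (fun b => (b ∩ S).card = 3) := by
    refine Finset.mem_filter.mpr ⟨Finset.mem_erase.mpr ⟨hcO, hcB⟩, ?_⟩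
    rw [Finset.inter_eq_right.mpr hcS, hS3]
  rw [hb₀] at this
  exact Finset.mem_singleton.mp this

/-- The unique block other than `O` containing a 3-subset `{x,y,z}` of `O`. -/
noncomputable def blk (B : Finset (Finset (Fin 15))) (O : Finset (Fin 15))
    (x y z : Fin 15) : Finset (Fin 15) :=
  ((B.erase O).filter (fun b => x ∈ b ∧ y ∈ b ∧ z ∈ b)).sup id

/-- The fourth point of the trace of `blk B O x y z` on `O`. -/
noncomputable def fourth (B : Finset (Finset (Fin 15))) (O : Finset (Fin 15))
    (x y z : Fin 15) : Fin 15 :=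
  ((O ∩ blk B O x y z) \ {x, y, z}).sup id

lemma blk_spec (hD : IsDesign B) (hO : IsCenter B O) {x y z : Fin 15}
    (hx : x ∈ O) (hy : y ∈ O) (hz : z ∈ O) (hxy : x ≠ y) (hxz : x ≠ z) (hyz : y ≠ z) :
    (blk B O x y z ∈ B ∧ blk B O x y z ≠ O ∧
      x ∈ blk B O x y z ∧ y ∈ blk B O x y z ∧ z ∈ blk B O x y z) ∧
      ∀ b ∈ B, b ≠ O → x ∈ b → y ∈ b → z ∈ b → b = blk B O x y z := by
  classical
  have hS3 : ({x, y, z} : Finset (Fin 15)).card = 3 :=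
    Finset.card_eq_three.mpr ⟨x, y, z, hxy, hxz, hyz, rfl⟩
  have hSO : ({x, y, z} : Finset (Fin 15)) ⊆ O := by
    intro a ha
    simp only [Finset.mem_insert, Finset.mem_singleton] at ha
    rcases ha with rfl | rfl | rfl <;> assumption
  obtain ⟨b₀, ⟨hb₀B, hb₀O, hb₀S⟩, huniq⟩ := triple hD hO hSO hS3
  have hxb₀ : x ∈ b₀ := hb₀S (by simp)
  have hyb₀ : y ∈ b₀ := hb₀S (by simp)
  have hzb₀ : z ∈ b₀ := hb₀S (by simp)
  have hfil : (B.erase O).filter (fun b => x ∈ b ∧ y ∈ b ∧ z ∈ b) = {b₀} := by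
    ext c
    simp only [Finset.mem_filter, Finset.mem_erase, Finset.mem_singleton]
    constructor
    · rintro ⟨⟨hcO, hcB⟩, hxc, hyc, hzc⟩
      exact huniq c ⟨hcB, hcO, by
        intro a ha
        simp only [Finset.mem_insert, Finset.mem_singleton] at ha
        rcases ha with rfl | rfl | rfl <;> assumption⟩
    · rintro rfl
      exact ⟨⟨hb₀O, hb₀B⟩, hxb₀, hyb₀, hzb₀⟩
  have hblk : blk B O x y z = b₀ := by
    rw [blk, hfil, Finset.sup_singleton]; rfl
  rw [hblk]
  exact ⟨⟨hb₀B, hb₀O, hxb₀, hyb₀, hzb₀⟩, fun b hb hbO h1 h2 h3 => by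
    exact huniq b ⟨hb, hbO, by
      intro a ha
      simp only [Finset.mem_insert, Finset.mem_singleton] at ha
      rcases ha with rfl | rfl | rfl <;> assumption⟩⟩

lemma trace4 (hD : IsDesign B) (hO : IsCenter B O) {b : Finset (Fin 15)}
    (hb : b ∈ B) (hbO : b ≠ O) : (O ∩ b).card = 4 :=
  hD.2.2 O hO.1 b hb (fun h => hbO h.symm)

lemma fourth_spec (hD : IsDesign B) (hO : IsCenter B O) {x y z : Fin 15}
    (hx : x ∈ O) (hy : y ∈ O) (hz : z ∈ O) (hxy : x ≠ y) (hxz : x ≠ z) (hyz : y ≠ z) :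
    fourth B O x y z ∈ O ∧ fourth B O x y z ∈ blk B O x y z ∧
      fourth B O x y z ≠ x ∧ fourth B O x y z ≠ y ∧ fourth B O x y z ≠ z ∧
      O ∩ blk B O x y z = insert (fourth B O x y z) {x, y, z} := by
  classical
  obtain ⟨⟨hbB, hbO, hxb, hyb, hzb⟩, _⟩ := blk_spec hD hO hx hy hz hxy hxz hyz
  have hT4 : (O ∩ blk B O x y z).card = 4 := trace4 hD hO hbB hbO
  have hS3 : ({x, y, z} : Finset (Fin 15)).card = 3 :=
    Finset.card_eq_three.mpr ⟨x, y, z, hxy, hxz, hyz, rfl⟩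
  have hsub : ({x, y, z} : Finset (Fin 15)) ⊆ O ∩ blk B O x y z := by
    intro a ha
    simp only [Finset.mem_insert, Finset.mem_singleton] at ha
    rcases ha with rfl | rfl | rfl <;> exact Finset.mem_inter.mpr ⟨by assumption, by assumption⟩
  have hdc : ((O ∩ blk B O x y z) \ {x, y, z}).card = 1 := by
    rw [Finset.card_sdiff_of_subset hsub, hT4, hS3]
  obtain ⟨w, hw⟩ := Finset.card_eq_one.mp hdc
  have hfw : fourth B O x y z = w := by
    rw [fourth, hw, Finset.sup_singleton]; rfl
  have hwmem : w ∈ (O ∩ blk B O x y z) \ ({x, y, z} : Finset (Fin 15)) := by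
    rw [hw]; exact Finset.mem_singleton_self w
  obtain ⟨hwT, hwS⟩ := Finset.mem_sdiff.mp hwmem
  simp only [Finset.mem_insert, Finset.mem_singleton] at hwS
  push_neg at hwS
  have hTeq : O ∩ blk B O x y z = insert w {x, y, z} := by
    have h1 : ({x, y, z} : Finset (Fin 15)) ∪ ((O ∩ blk B O x y z) \ {x, y, z})
        = O ∩ blk B O x y z := Finset.union_sdiff_of_subset hsub
    rw [hw] at h1
    rw [← h1]
    ext a
    simp only [Finset.mem_union, Finset.mem_insert, Finset.mem_singleton]
    tauto
  rw [hfw]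
  exact ⟨(Finset.mem_inter.mp hwT).1, (Finset.mem_inter.mp hwT).2,
    hwS.1, hwS.2.1, hwS.2.2, hTeq⟩

lemma fourth_invol (hD : IsDesign B) (hO : IsCenter B O) {x y z : Fin 15}
    (hx : x ∈ O) (hy : y ∈ O) (hz : z ∈ O) (hxy : x ≠ y) (hxz : x ≠ z) (hyz : y ≠ z) :
    blk B O x y (fourth B O x y z) = blk B O x y z ∧
      fourth B O x y (fourth B O x y z) = z := by
  obtain ⟨hwO, hwb, hwx, hwy, hwz, hTeq⟩ := fourth_spec hD hO hx hy hz hxy hxz hyz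
  set w := fourth B O x y z with hwdef
  obtain ⟨⟨hbB, hbO, hxb, hyb, _⟩, _⟩ := blk_spec hD hO hx hy hz hxy hxz hyz
  obtain ⟨_, huniqw⟩ := blk_spec hD hO hx hy hwO hxy (Ne.symm hwx) (Ne.symm hwy)
  have hbeq : blk B O x y z = blk B O x y w := huniqw _ hbB hbO hxb hyb hwb
  obtain ⟨hw'O, hw'b, hw'x, hw'y, hw'w, hTeq'⟩ :=
    fourth_spec hD hO hx hy hwO hxy (Ne.symm hwx) (Ne.symm hwy)
  set w' := fourth B O x y w with hw'def
  have hzmem : z ∈ insert w' ({x, y, w} : Finset (Fin 15)) := by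
    rw [← hTeq', ← hbeq, hTeq]
    simp
  simp only [Finset.mem_insert, Finset.mem_singleton] at hzmem
  rcases hzmem with h | h | h | h
  · exact ⟨hbeq.symm, h.symm⟩
  · exact absurd h hxz.symm
  · exact absurd h hyz.symm
  · exact absurd h (Ne.symm hwz)

lemma symmDiff_ne_O (hD : IsDesign B) {b : Finset (Fin 15)} (hb : b ∈ B) :
    symmDiff O b ≠ O := by
  intro h
  have hb' : b = ∅ := by
    have h2 := symmDiff_symmDiff_cancel_left O b
    rw [h] at h2
    rw [← h2]; simp
  rw [hb'] at hb
  have := hD.2.1 ∅ hb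
  simp at this

lemma symmDiff_eq_union (O b : Finset (Fin 15)) :
    symmDiff O b = (O \ b) ∪ (b \ O) := by
  ext a; simp [Finset.mem_symmDiff, Finset.mem_sdiff]

lemma block_eq_of_triple (hD : IsDesign B) (hO : IsCenter B O) {p q r : Fin 15}
    (hp : p ∈ O) (hq : q ∈ O) (hr : r ∈ O)
    (hpq : p ≠ q) (hpr : p ≠ r) (hqr : q ≠ r) {b c : Finset (Fin 15)}
    (hb : b ∈ B) (hbO : b ≠ O) (hc : c ∈ B) (hcO : c ≠ O)
    (hpb : p ∈ b) (hqb : q ∈ b) (hrb : r ∈ b)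
    (hpc : p ∈ c) (hqc : q ∈ c) (hrc : r ∈ c) : b = c := by
  obtain ⟨_, huniq⟩ := blk_spec hD hO hp hq hr hpq hpr hqr
  rw [huniq b hb hbO hpb hqb hrb, huniq c hc hcO hpc hqc hrc]

lemma sigma_exists (hD : IsDesign B) (hO : IsCenter B O) {x y : Fin 15}
    (hx : x ∈ O) (hy : y ∈ O) (hxy : x ≠ y) :
    ∃ σ : Equiv.Perm (Fin 15), σ ∈ designAut B ∧ (∀ z, z ∉ O → σ z = z) ∧
      σ x = y ∧ σ * σ = 1 := by
  classical
  set f : Fin 15 → Fin 15 := fun z =>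
    if z ∈ O then (if z = x then y else if z = y then x else fourth B O x y z) else z
    with hfdef
  have hf_out : ∀ z, z ∉ O → f z = z := by intro z hz; simp [hfdef, hz]
  have hf_x : f x = y := by simp [hfdef, hx]
  have hf_y : f y = x := by simp [hfdef, hy, Ne.symm hxy]
  have hf_z : ∀ z, z ∈ O → z ≠ x → z ≠ y → f z = fourth B O x y z := by
    intro z h1 h2 h3; simp [hfdef, h1, h2, h3]
  have hspec : ∀ z, z ∈ O → z ≠ x → z ≠ y →
      (fourth B O x y z ∈ O ∧ fourth B O x y z ∈ blk B O x y z ∧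
        fourth B O x y z ≠ x ∧ fourth B O x y z ≠ y ∧ fourth B O x y z ≠ z ∧
        O ∩ blk B O x y z = insert (fourth B O x y z) {x, y, z}) := by
    intro z h1 h2 h3
    exact fourth_spec hD hO hx hy h1 hxy (Ne.symm h2) (Ne.symm h3)
  have hblkspec : ∀ z, z ∈ O → z ≠ x → z ≠ y →
      (blk B O x y z ∈ B ∧ blk B O x y z ≠ O ∧
        x ∈ blk B O x y z ∧ y ∈ blk B O x y z ∧ z ∈ blk B O x y z) := by
    intro z h1 h2 h3
    exact (blk_spec hD hO hx hy h1 hxy (Ne.symm h2) (Ne.symm h3)).1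
  have hf_mem : ∀ z, z ∈ O → f z ∈ O := by
    intro z hz
    by_cases hzx : z = x
    · subst hzx; rw [hf_x]; exact hy
    · by_cases hzy : z = y
      · subst hzy; rw [hf_y]; exact hx
      · rw [hf_z z hz hzx hzy]; exact (hspec z hz hzx hzy).1
  have hinv : Function.Involutive f := by
    intro z
    by_cases hz : z ∈ O
    · by_cases hzx : z = x
      · subst hzx; rw [hf_x, hf_y]
      · by_cases hzy : z = y
        · subst hzy; rw [hf_y, hf_x]
        · rw [hf_z z hz hzx hzy]
          obtain ⟨hwO, _, hwx, hwy, hwz, _⟩ := hspec z hz hzx hzy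
          rw [hf_z _ hwO hwx hwy]
          exact (fourth_invol hD hO hx hy hz hxy (Ne.symm hzx) (Ne.symm hzy)).2
    · rw [hf_out z hz, hf_out z hz]
  have hinj : Function.Injective f := hinv.injective
  have hblocks : ∀ b ∈ B, b.image f ∈ B := by
    intro b hb
    by_cases hbO : b = O
    · subst hbO
      have himg : b.image f = b := by
        apply Finset.eq_of_subset_of_card_le
        · intro a ha
          obtain ⟨c, hc, rfl⟩ := Finset.mem_image.mp ha
          exact hf_mem c hc
        · rw [Finset.card_image_of_injective _ hinj]
      rw [himg]; exact hb
    · have hb8 : b.card = 8 := hD.2.1 b hb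
      have hO8 : O.card = 8 := hD.2.1 O hO.1
      have hT4 : (O ∩ b).card = 4 := trace4 hD hO hb hbO
      have hsplit : b = (O ∩ b) ∪ (b \ O) := by
        ext a
        simp only [Finset.mem_union, Finset.mem_inter, Finset.mem_sdiff]
        tauto
      have himgsplit : b.image f = (O ∩ b).image f ∪ (b \ O) := by
        conv_lhs => rw [hsplit]
        rw [Finset.image_union]
        congr 1
        calc (b \ O).image f = (b \ O).image id :=
              Finset.image_congr (fun a ha => hf_out a (Finset.mem_sdiff.mp ha).2)
          _ = b \ O := Finset.image_id
      have hOb4 : (O \ b).card = 4 := by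
        have h1 : O \ b = O \ (O ∩ b) := by
          ext a
          simp only [Finset.mem_sdiff, Finset.mem_inter]
          tauto
        rw [h1, Finset.card_sdiff_of_subset Finset.inter_subset_left, hO8, hT4]
      have himgcard : ((O ∩ b).image f).card = 4 := by
        rw [Finset.card_image_of_injective _ hinj, hT4]
      have himgfix : (∀ a ∈ O ∩ b, f a ∈ O ∩ b) → b.image f = b := by
        intro hsub
        have himgT : (O ∩ b).image f = O ∩ b := by
          apply Finset.eq_of_subset_of_card_le
          · intro a ha
            obtain ⟨c, hc, rfl⟩ := Finset.mem_image.mp ha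
            exact hsub c hc
          · rw [himgcard, hT4]
        rw [himgsplit, himgT, ← hsplit]
      have himgswap : (∀ a ∈ O ∩ b, f a ∈ O \ b) → b.image f = symmDiff O b := by
        intro hsub
        have himgT : (O ∩ b).image f = O \ b := by
          apply Finset.eq_of_subset_of_card_le
          · intro a ha
            obtain ⟨c, hc, rfl⟩ := Finset.mem_image.mp ha
            exact hsub c hc
          · rw [himgcard, hOb4]
        rw [himgsplit, himgT, symmDiff_eq_union]
      by_cases hxb : x ∈ b <;> by_cases hyb : y ∈ b
      · -- x ∈ b, y ∈ b : image f b = b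
        rw [himgfix ?_]
        · exact hb
        intro a ha
        obtain ⟨haO, hab⟩ := Finset.mem_inter.mp ha
        by_cases hax : a = x
        · subst hax; exact hf_x ▸ Finset.mem_inter.mpr ⟨hy, hyb⟩
        · by_cases hay : a = y
          · subst hay; exact hf_y ▸ Finset.mem_inter.mpr ⟨hx, hxb⟩
          · rw [hf_z a haO hax hay]
            obtain ⟨hwO, hwb, _, _, _, _⟩ := hspec a haO hax hay
            obtain ⟨hBb, hBO, _, _, _⟩ := hblkspec a haO hax hay
            have hbeq : b = blk B O x y a :=
              (blk_spec hD hO hx hy haO hxy (Ne.symm hax) (Ne.symm hay)).2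
                b hb hbO hxb hyb hab
            rw [← hbeq] at hwb
            exact Finset.mem_inter.mpr ⟨hwO, hwb⟩
      · -- x ∈ b, y ∉ b : image f b = O △ b
        rw [himgswap ?_]
        · exact hO.2 b hb hbO
        intro a ha
        obtain ⟨haO, hab⟩ := Finset.mem_inter.mp ha
        by_cases hax : a = x
        · subst hax; exact hf_x ▸ Finset.mem_sdiff.mpr ⟨hy, hyb⟩
        · have hay : a ≠ y := fun h => hyb (h ▸ hab)
          rw [hf_z a haO hax hay]
          obtain ⟨hwO, hwb, hwx, hwy, hwa, _⟩ := hspec a haO hax hay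
          obtain ⟨hBb, hBO, hxB, hyB, haB⟩ := hblkspec a haO hax hay
          refine Finset.mem_sdiff.mpr ⟨hwO, fun hwbb => ?_⟩
          have hbeq : b = blk B O x y a :=
            block_eq_of_triple hD hO hx haO hwO (Ne.symm hax) (Ne.symm hwx) (Ne.symm hwa)
              hb hbO hBb hBO hxb hab hwbb hxB haB hwb
          rw [← hbeq] at hyB
          exact hyb hyB
      · -- y ∈ b, x ∉ b : image f b = O △ b
        rw [himgswap ?_]
        · exact hO.2 b hb hbO
        intro a ha
        obtain ⟨haO, hab⟩ := Finset.mem_inter.mp ha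
        have hax : a ≠ x := fun h => hxb (h ▸ hab)
        by_cases hay : a = y
        · subst hay; exact hf_y ▸ Finset.mem_sdiff.mpr ⟨hx, hxb⟩
        · rw [hf_z a haO hax hay]
          obtain ⟨hwO, hwb, hwx, hwy, hwa, _⟩ := hspec a haO hax hay
          obtain ⟨hBb, hBO, hxB, hyB, haB⟩ := hblkspec a haO hax hay
          refine Finset.mem_sdiff.mpr ⟨hwO, fun hwbb => ?_⟩
          have hbeq : b = blk B O x y a :=
            block_eq_of_triple hD hO hy haO hwO (Ne.symm hay) (Ne.symm hwy) (Ne.symm hwa)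
              hb hbO hBb hBO hyb hab hwbb hyB haB hwb
          rw [← hbeq] at hxB
          exact hxb hxB
      · -- x ∉ b, y ∉ b : image f b = b
        rw [himgfix ?_]
        · exact hb
        intro a ha
        obtain ⟨haO, hab⟩ := Finset.mem_inter.mp ha
        have hax : a ≠ x := fun h => hxb (h ▸ hab)
        have hay : a ≠ y := fun h => hyb (h ▸ hab)
        rw [hf_z a haO hax hay]
        obtain ⟨hwO, hwb, hwx, hwy, hwa, _⟩ := hspec a haO hax hay
        obtain ⟨hBb, hBO, hxB, hyB, haB⟩ := hblkspec a haO hax hay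
        refine Finset.mem_inter.mpr ⟨hwO, ?_⟩
        by_contra hwbb
        -- w ∉ b : then x, y, w all lie in O △ b, so blk x y a = O △ b ∋ a, contradiction
        have hsB : symmDiff O b ∈ B := hO.2 b hb hbO
        have hsO : symmDiff O b ≠ O := symmDiff_ne_O hD hb
        have hxs : x ∈ symmDiff O b := by
          rw [Finset.mem_symmDiff]; exact Or.inl ⟨hx, hxb⟩
        have hys : y ∈ symmDiff O b := by
          rw [Finset.mem_symmDiff]; exact Or.inl ⟨hy, hyb⟩
        have hws : fourth B O x y a ∈ symmDiff O b := by
          rw [Finset.mem_symmDiff]; exact Or.inl ⟨hwO, hwbb⟩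
        have hbeq : blk B O x y a = symmDiff O b :=
          block_eq_of_triple hD hO hx hy hwO hxy (Ne.symm hwx) (Ne.symm hwy)
            hBb hBO hsB hsO hxB hyB hwb hxs hys hws
        rw [hbeq, Finset.mem_symmDiff] at haB
        rcases haB with ⟨_, hnb⟩ | ⟨_, hnO⟩
        · exact hnb hab
        · exact hnO haO
  refine ⟨hinv.toPerm, ?_, ?_, ?_, ?_⟩
  · intro b hb
    exact hblocks b hb
  · intro z hz
    exact hf_out z hz
  · exact hf_x
  · exact Equiv.ext fun z => hinv z

lemma stab_trivial (hD : IsDesign B) (hO : IsCenter B O) {τ : Equiv.Perm (Fin 15)}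
    (hτ : τ ∈ designAut B) (hfix : ∀ z, z ∉ O → τ z = z)
    {x₀ : Fin 15} (hx₀ : x₀ ∈ O) (hτx₀ : τ x₀ = x₀) : τ = 1 := by
  classical
  have hO8 : O.card = 8 := hD.2.1 O hO.1
  have hτO : ∀ z, z ∈ O → τ z ∈ O := by
    intro z hz
    by_contra h
    have h1 : τ (τ z) = τ z := hfix (τ z) h
    have h2 : τ z = z := τ.injective h1
    rw [h2] at h
    exact h hz
  -- every block through x₀ has its trace fixed setwise by τ
  have htr : ∀ b ∈ B, b ≠ O → x₀ ∈ b → ∀ z ∈ O ∩ b, τ z ∈ O ∩ b := by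
    intro b hb hbO hx₀b
    have hb8 : b.card = 8 := hD.2.1 b hb
    have hT4 : (O ∩ b).card = 4 := trace4 hD hO hb hbO
    have hsplit : b = (O ∩ b) ∪ (b \ O) := by
      ext a
      simp only [Finset.mem_union, Finset.mem_inter, Finset.mem_sdiff]
      tauto
    have himgsplit : b.image τ = (O ∩ b).image τ ∪ (b \ O) := by
      conv_lhs => rw [hsplit]
      rw [Finset.image_union]
      congr 1
      calc (b \ O).image τ = (b \ O).image id :=
            Finset.image_congr (fun a ha => hfix a (Finset.mem_sdiff.mp ha).2)
        _ = b \ O := Finset.image_id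
    have himgT_sub_O : (O ∩ b).image τ ⊆ O := by
      intro a ha
      obtain ⟨c, hc, rfl⟩ := Finset.mem_image.mp ha
      exact hτO c (Finset.mem_inter.mp hc).1
    have hbb : b.image τ ∈ B := hτ b hb
    have hEne : (b \ O).Nonempty := by
      rw [← Finset.card_pos]
      have h1 : b \ O = b \ (O ∩ b) := by
        ext a; simp only [Finset.mem_sdiff, Finset.mem_inter]; tauto
      rw [h1, Finset.card_sdiff_of_subset Finset.inter_subset_right, hb8, hT4]
      norm_num
    have hbbO : b.image τ ≠ O := by
      intro h
      obtain ⟨e, he⟩ := hEne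
      have h1 : e ∈ b.image τ := by
        rw [himgsplit]; exact Finset.mem_union_right _ he
      rw [h] at h1
      exact (Finset.mem_sdiff.mp he).2 h1
    -- the image block is b or O △ b
    have himg2 : b.image τ = b ∨ b.image τ = symmDiff O b := by
      by_cases h : b.image τ = b
      · exact Or.inl h
      · refine Or.inr ?_
        have hbb4 : (b ∩ b.image τ).card = 4 := hD.2.2 b hb _ hbb (fun hh => h hh.symm)
        have hEsub : b \ O ⊆ b ∩ b.image τ := by
          intro e he
          refine Finset.mem_inter.mpr ⟨(Finset.mem_sdiff.mp he).1, ?_⟩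
          rw [himgsplit]; exact Finset.mem_union_right _ he
        have hE4 : (b \ O).card = 4 := by
          have h1 : b \ O = b \ (O ∩ b) := by
            ext a; simp only [Finset.mem_sdiff, Finset.mem_inter]; tauto
          rw [h1, Finset.card_sdiff_of_subset Finset.inter_subset_right, hb8, hT4]
        have hEeq : b ∩ b.image τ = b \ O :=
          (Finset.eq_of_subset_of_card_le hEsub (by rw [hbb4, hE4])).symm ▸ rfl
        -- O ∩ image = O \ b
        have h2 : O ∩ b.image τ ⊆ O \ b := by
          intro a ha
          obtain ⟨haO, hai⟩ := Finset.mem_inter.mp ha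
          refine Finset.mem_sdiff.mpr ⟨haO, fun hab => ?_⟩
          have : a ∈ b ∩ b.image τ := Finset.mem_inter.mpr ⟨hab, hai⟩
          rw [hEeq] at this
          exact (Finset.mem_sdiff.mp this).2 haO
        have hOb4 : (O \ b).card = 4 := by
          have h1 : O \ b = O \ (O ∩ b) := by
            ext a; simp only [Finset.mem_sdiff, Finset.mem_inter]; tauto
          rw [h1, Finset.card_sdiff_of_subset Finset.inter_subset_left, hO8, hT4]
        have hOi4 : (O ∩ b.image τ).card = 4 := trace4 hD hO hbb hbbO
        have h3 : O ∩ b.image τ = O \ b :=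
          Finset.eq_of_subset_of_card_le h2 (by rw [hOb4, hOi4])
        -- conclude
        have h4 : b.image τ = (O ∩ b.image τ) ∪ (b.image τ \ O) := by
          ext a
          simp only [Finset.mem_union, Finset.mem_inter, Finset.mem_sdiff]
          tauto
        have h5 : b.image τ \ O = b \ O := by
          rw [himgsplit]
          ext a
          simp only [Finset.mem_union, Finset.mem_sdiff]
          constructor
          · rintro ⟨h6 | h6, h7⟩
            · exact absurd (himgT_sub_O h6) h7
            · exact h6
          · intro h6
            exact ⟨Or.inr h6, h6.2⟩
        rw [h4, h3, h5, symmDiff_eq_union]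
    -- trace is fixed setwise
    have hτT : (O ∩ b).image τ = O ∩ b := by
      have hOT : O ∩ b.image τ = (O ∩ b).image τ := by
        rw [himgsplit]
        ext a
        simp only [Finset.mem_inter, Finset.mem_union, Finset.mem_sdiff]
        constructor
        · rintro ⟨haO, h6 | h6⟩
          · exact h6
          · exact absurd haO h6.2
        · intro h6
          exact ⟨himgT_sub_O h6, Or.inl h6⟩
      rcases himg2 with h6 | h6
      · rw [← hOT, h6]
      · -- impossible since τ x₀ = x₀ ∈ O ∩ b
        exfalso
        have h7 : x₀ ∈ (O ∩ b).image τ := by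
          refine Finset.mem_image.mpr ⟨x₀, Finset.mem_inter.mpr ⟨hx₀, hx₀b⟩, hτx₀⟩
        rw [← hOT, h6] at h7
        obtain ⟨_, h8⟩ := Finset.mem_inter.mp h7
        rw [Finset.mem_symmDiff] at h8
        rcases h8 with ⟨_, h9⟩ | ⟨_, h9⟩
        · exact h9 hx₀b
        · exact h9 hx₀
    intro z hz
    rw [← hτT]
    exact Finset.mem_image.mpr ⟨z, hz, rfl⟩
  -- now show every point is fixed
  refine Equiv.ext fun z => ?_
  by_cases hz : z ∈ O
  · by_cases hzx : z = x₀
    · rw [hzx]; exact hτx₀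
    · -- pick two distinct blocks through {x₀, z}
      have hw₁ : (O \ {x₀, z}).Nonempty := by
        rw [← Finset.card_pos]
        have h1 : (({x₀, z} : Finset (Fin 15))).card ≤ 2 := Finset.card_insert_le _ _ |>.trans (by simp)
        have h2 := Finset.le_card_sdiff ({x₀, z} : Finset (Fin 15)) O
        omega
      obtain ⟨w₁, hw₁m⟩ := hw₁
      obtain ⟨hw₁O, hw₁S⟩ := Finset.mem_sdiff.mp hw₁m
      simp only [Finset.mem_insert, Finset.mem_singleton] at hw₁S
      push_neg at hw₁S
      have hzx₀ : x₀ ≠ z := fun h => hzx h.symm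
      obtain ⟨⟨hb₁B, hb₁O, hxb₁, hzb₁, hwb₁⟩, _⟩ :=
        blk_spec hD hO hx₀ hz hw₁O hzx₀ (Ne.symm hw₁S.1) (Ne.symm hw₁S.2)
      set b₁ := blk B O x₀ z w₁ with hb₁def
      have hw₂ : (O \ b₁).Nonempty := by
        rw [← Finset.card_pos]
        have h1 : O \ b₁ = O \ (O ∩ b₁) := by
          ext a; simp only [Finset.mem_sdiff, Finset.mem_inter]; tauto
        rw [h1, Finset.card_sdiff_of_subset Finset.inter_subset_left, hO8, trace4 hD hO hb₁B hb₁O]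
        norm_num
      obtain ⟨w₂, hw₂m⟩ := hw₂
      obtain ⟨hw₂O, hw₂b₁⟩ := Finset.mem_sdiff.mp hw₂m
      have hw₂x : x₀ ≠ w₂ := fun h => hw₂b₁ (h ▸ hxb₁)
      have hw₂z : z ≠ w₂ := fun h => hw₂b₁ (h ▸ hzb₁)
      obtain ⟨⟨hb₂B, hb₂O, hxb₂, hzb₂, hwb₂⟩, _⟩ :=
        blk_spec hD hO hx₀ hz hw₂O hzx₀ hw₂x hw₂z
      set b₂ := blk B O x₀ z w₂ with hb₂def
      have hb₁₂ : b₁ ≠ b₂ := fun h => hw₂b₁ (h ▸ hwb₂)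
      have hτz₁ := htr b₁ hb₁B hb₁O hxb₁ z (Finset.mem_inter.mpr ⟨hz, hzb₁⟩)
      have hτz₂ := htr b₂ hb₂B hb₂O hxb₂ z (Finset.mem_inter.mpr ⟨hz, hzb₂⟩)
      obtain ⟨hτzO, hτzb₁⟩ := Finset.mem_inter.mp hτz₁
      obtain ⟨_, hτzb₂⟩ := Finset.mem_inter.mp hτz₂
      -- τ z ∈ b₁ ∩ b₂ ∩ O = {x₀, z}
      have hmem : τ z = x₀ ∨ τ z = z := by
        by_contra h
        push_neg at h
        obtain ⟨h1, h2⟩ := h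
        exact hb₁₂ (block_eq_of_triple hD hO hx₀ hz hτzO hzx₀
          (Ne.symm h1) (Ne.symm h2) hb₁B hb₁O hb₂B hb₂O hxb₁ hzb₁ hτzb₁ hxb₂ hzb₂ hτzb₂)
      rcases hmem with h | h
      · exfalso
        exact hzx (τ.injective (h.trans hτx₀.symm))
      · exact h
  · exact hfix z hz
end Stmt18

/-- if the block family of a symmetric (15,8,4)-design has a center point
`O`, then `Aut(𝒟)` contains a subgroup `H ≅ (ZMod 2)³` whose elements fix every point
outside `O` and which acts sharply transitively on the 8 points of `O`; in particular
the design is 7-pyramidal. -/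
theorem stmt18 (B : Finset (Finset (Fin 15))) (hD : IsDesign B)
    (O : Finset (Fin 15)) (hO : IsCenter B O) :
    ∃ H : Subgroup (Equiv.Perm (Fin 15)),
      H ≤ designAut B ∧
      Nonempty (↥H ≃* Multiplicative (ZMod 2 × ZMod 2 × ZMod 2)) ∧
      (∀ σ ∈ H, ∀ x : Fin 15, x ∉ O → σ x = x) ∧
      (∀ x ∈ O, ∀ y ∈ O, ∃! σ : Equiv.Perm (Fin 15), σ ∈ H ∧ σ x = y) := by
  classical
  open Stmt18 in
  have hO8 : O.card = 8 := hD.2.1 O hO.1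
  have hOtoO : ∀ σ : Equiv.Perm (Fin 15), (∀ z, z ∉ O → σ z = z) → ∀ z ∈ O, σ z ∈ O := by
    intro σ hfix z hz
    by_contra h
    have h1 : σ (σ z) = σ z := hfix (σ z) h
    have h2 : σ z = z := σ.injective h1
    rw [h2] at h
    exact h hz
  let H : Subgroup (Equiv.Perm (Fin 15)) :=
    { carrier := {σ : Equiv.Perm (Fin 15) | σ ∈ designAut B ∧ ∀ z, z ∉ O → σ z = z}
      one_mem' := ⟨(designAut B).one_mem, fun z _ => rfl⟩
      mul_mem' := by
        rintro a b ⟨ha1, ha2⟩ ⟨hb1, hb2⟩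
        refine ⟨(designAut B).mul_mem ha1 hb1, fun z hz => ?_⟩
        simp only [Equiv.Perm.mul_apply, hb2 z hz, ha2 z hz]
      inv_mem' := by
        rintro a ⟨ha1, ha2⟩
        refine ⟨(designAut B).inv_mem ha1, fun z hz => ?_⟩
        apply a.injective
        rw [Equiv.Perm.inv_def, Equiv.apply_symm_apply, ha2 z hz] }
  have hmemH : ∀ σ : Equiv.Perm (Fin 15),
      σ ∈ H ↔ (σ ∈ designAut B ∧ ∀ z, z ∉ O → σ z = z) := fun σ => Iff.rfl
  have sharp : ∀ x ∈ O, ∀ y ∈ O, ∃! σ : Equiv.Perm (Fin 15), σ ∈ H ∧ σ x = y := by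
    intro x hx y hy
    by_cases hxy : x = y
    · subst hxy
      refine ⟨1, ⟨H.one_mem, rfl⟩, ?_⟩
      rintro τ ⟨hτH, hτx⟩
      have h := (hmemH τ).mp hτH
      exact stab_trivial hD hO h.1 h.2 hx hτx
    · obtain ⟨σ, hσA, hσfix, hσx, hσ2⟩ := sigma_exists hD hO hx hy hxy
      have hσH : σ ∈ H := (hmemH σ).mpr ⟨hσA, hσfix⟩
      refine ⟨σ, ⟨hσH, hσx⟩, ?_⟩
      rintro τ ⟨hτH, hτx⟩
      have hmem : σ⁻¹ * τ ∈ H := H.mul_mem (H.inv_mem hσH) hτH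
      have hmem' := (hmemH _).mp hmem
      have hfixx : (σ⁻¹ * τ) x = x := by
        have h1 : σ⁻¹ y = x := by
          apply σ.injective; rw [Equiv.Perm.inv_def, Equiv.apply_symm_apply, hσx]
        simp only [Equiv.Perm.mul_apply, hτx, h1]
      have h1 : σ⁻¹ * τ = 1 := stab_trivial hD hO hmem'.1 hmem'.2 hx hfixx
      calc τ = σ * (σ⁻¹ * τ) := by group
        _ = σ := by rw [h1]; group
  have hsq' : ∀ σ : Equiv.Perm (Fin 15), σ ∈ H → σ * σ = 1 := by
    intro σ hσ
    have hσ' := (hmemH σ).mp hσ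
    by_cases h1 : σ = 1
    · rw [h1]; group
    · have hex : ∃ x, σ x ≠ x := by
        by_contra h; push_neg at h; exact h1 (Equiv.ext h)
      obtain ⟨x, hxne⟩ := hex
      have hxO : x ∈ O := by
        by_contra h; exact hxne (hσ'.2 x h)
      have hyO : σ x ∈ O := hOtoO σ hσ'.2 x hxO
      obtain ⟨σ', hσ'A, hσ'fix, hσ'x, hσ'2⟩ := sigma_exists hD hO hxO hyO (Ne.symm hxne)
      obtain ⟨w, _, huniq⟩ := sharp x hxO (σ x) hyO
      have e1 : σ = w := huniq σ ⟨hσ, rfl⟩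
      have e2 : σ' = w := huniq σ' ⟨(hmemH σ').mpr ⟨hσ'A, hσ'fix⟩, hσ'x⟩
      rw [e1, ← e2]; exact hσ'2
  -- cardinality
  have hne : O.Nonempty := by rw [← Finset.card_pos, hO8]; norm_num
  obtain ⟨x₀, hx₀⟩ := hne
  haveI : Fintype ↥H := Fintype.ofFinite ↥H
  have hcard : Fintype.card ↥H = 8 := by
    have hbij : Function.Bijective
        (fun g : ↥H => (⟨g.1 x₀, hOtoO g.1 ((hmemH g.1).mp g.2).2 x₀ hx₀⟩ : {a // a ∈ O})) := by
      constructor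
      · intro g₁ g₂ heq
        have hval : g₁.1 x₀ = g₂.1 x₀ := congrArg Subtype.val heq
        have hyO : g₁.1 x₀ ∈ O := hOtoO g₁.1 ((hmemH g₁.1).mp g₁.2).2 x₀ hx₀
        obtain ⟨w, _, huniq⟩ := sharp x₀ hx₀ (g₁.1 x₀) hyO
        exact Subtype.ext ((huniq g₁.1 ⟨g₁.2, rfl⟩).trans (huniq g₂.1 ⟨g₂.2, hval.symm⟩).symm)
      · intro a
        obtain ⟨σ, ⟨hσH, hσx⟩, _⟩ := sharp x₀ hx₀ a.1 a.2
        exact ⟨⟨σ, hσH⟩, Subtype.ext hσx⟩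
    rw [Fintype.card_of_bijective hbij]
    exact Fintype.card_coe O ▸ hO8
  -- commutative group of exponent 2
  have hsq : ∀ g : ↥H, g * g = 1 := by
    intro g
    exact Subtype.ext (hsq' g.1 g.2)
  have hinv2 : ∀ g : ↥H, g⁻¹ = g := fun g => inv_eq_of_mul_eq_one_left (hsq g)
  letI cg : CommGroup ↥H :=
    { (inferInstance : Group ↥H) with
      mul_comm := by
        intro a b
        calc a * b = (a * b)⁻¹ := (hinv2 (a * b)).symm
          _ = b⁻¹ * a⁻¹ := mul_inv_rev a b
          _ = b * a := by rw [hinv2, hinv2] }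
  letI : Module (ZMod 2) (Additive ↥H) := AddCommGroup.zmodModule (n := 2) (by
    intro g
    show (2 : ℕ) • g = 0
    rw [two_smul]
    exact hsq (Additive.toMul g))
  haveI : Fintype (Additive ↥H) := Fintype.ofEquiv ↥H Additive.ofMul
  haveI : Module.Finite (ZMod 2) (Additive ↥H) := Module.Finite.of_finite
  have hcard2 : Fintype.card (Additive ↥H) = 8 := by
    rw [Fintype.card_congr Additive.toMul]
    exact hcard
  have hrank : Module.finrank (ZMod 2) (Additive ↥H) = 3 := by
    have h := Module.card_eq_pow_finrank (K := ZMod 2) (V := Additive ↥H)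
    rw [hcard2, ZMod.card] at h
    have h3 : (2 : ℕ) ^ 3 = 2 ^ Module.finrank (ZMod 2) (Additive ↥H) := by
      rw [← h]; norm_num
    exact (Nat.pow_right_injective (le_refl 2) h3).symm
  let bEq := (Module.finBasisOfFinrankEq (ZMod 2) (Additive ↥H) hrank).equivFun
  let e2 : (Fin 3 → ZMod 2) ≃+ ZMod 2 × ZMod 2 × ZMod 2 :=
    { toFun := fun f => (f 0, f 1, f 2)
      invFun := fun p => ![p.1, p.2.1, p.2.2]
      left_inv := by intro f; funext i; fin_cases i <;> rfl
      right_inv := by intro p; rfl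
      map_add' := by intro f g; rfl }
  refine ⟨H, fun σ hσ => ((hmemH σ).mp hσ).1,
    ⟨(MulEquiv.multiplicativeAdditive ↥H).symm.trans
      ((bEq.toAddEquiv.trans e2).toMultiplicative)⟩,
    fun σ hσ x hx => ((hmemH σ).mp hσ).2 x hx, sharp⟩
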